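/- Let X_1, …, X_n be centered, independent and identically distributed real random variables in L^p, p ≥ 2. Then there is a constant c_p > 0, depending only on p, such that ‖∑_{i=1}^n X_i‖_p ≤ c_p (√n ‖X_1‖_2 + n^{1/p} ‖X_1‖_p). -/

import Mathlib

open MeasureTheory ProbabilityTheory Real

noncomputable section

namespace RosenthalAux

lemma self_mul_rpow {s q : ℝ} (hs : 0 ≤ s) (hq : 0 ≤ q) : s * s ^ q = s ^ (q + 1) := by
  rcases eq_or_lt_of_le hs with h | h
  · rw [← h, Real.zero_rpow (by positivity : q + 1 ≠ (0:ℝ))]; ring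
  · rw [Real.rpow_add h, Real.rpow_one]; ring

lemma bernoulli_aux {q s t : ℝ} (hq : 0 ≤ q) (ht : 0 ≤ t) (hts : t ≤ s) :
    s ^ (q + 1) - t ^ (q + 1) ≤ (q + 1) * s ^ q * (s - t) := by
  rcases eq_or_lt_of_le (ht.trans hts) with h0 | hs
  · have hs0 : s = 0 := h0.symm
    have ht0 : t = 0 := le_antisymm (hts.trans_eq hs0) ht
    simp [hs0, ht0, Real.zero_rpow (by positivity : q + 1 ≠ (0:ℝ))]
  · set x := t / s with hxdef
    have hx0 : 0 ≤ x := div_nonneg ht hs.le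
    have hx1 : x ≤ 1 := (div_le_one hs).2 hts
    have hb : 1 + (q + 1) * (x - 1) ≤ x ^ (q + 1) := by
      have h := one_add_mul_self_le_rpow_one_add (s := x - 1) (by linarith) (p := q + 1) (by linarith)
      simpa using h
    have hst : t = x * s := (div_mul_cancel₀ t hs.ne').symm
    have hxq : t ^ (q + 1) = x ^ (q + 1) * s ^ (q + 1) := by
      rw [hst, Real.mul_rpow hx0 hs.le]
    have hsq : s ^ (q + 1) = s ^ q * s := by
      rw [Real.rpow_add hs, Real.rpow_one]
    have hmul := mul_le_mul_of_nonneg_right (by linarith : 1 - x ^ (q+1) ≤ (q+1) * (1 - x))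
        (Real.rpow_nonneg hs.le (q+1))
    calc s ^ (q+1) - t ^ (q+1) = (1 - x ^ (q+1)) * s ^ (q+1) := by rw [hxq]; ring
      _ ≤ (q+1) * (1 - x) * s ^ (q+1) := hmul
      _ = (q+1) * s ^ q * (s - t) := by rw [hsq, hst]; ring

lemma phi_mono {q s t : ℝ} (hq : 0 ≤ q) (hts : t ≤ s) : t * |t| ^ q ≤ s * |s| ^ q := by
  rcases le_or_gt 0 t with ht | ht
  · have hs : 0 ≤ s := ht.trans hts
    rw [abs_of_nonneg ht, abs_of_nonneg hs]
    exact mul_le_mul hts (Real.rpow_le_rpow ht hts hq) (Real.rpow_nonneg ht q) hs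
  · rcases le_or_gt 0 s with hs | hs
    · have h1 : t * |t| ^ q ≤ 0 :=
        mul_nonpos_of_nonpos_of_nonneg ht.le (Real.rpow_nonneg (abs_nonneg t) q)
      exact h1.trans (mul_nonneg hs (Real.rpow_nonneg (abs_nonneg s) q))
    · rw [abs_of_neg ht, abs_of_neg hs]
      have h2 : (-s) * (-s) ^ q ≤ (-t) * (-t) ^ q :=
        mul_le_mul (by linarith) (Real.rpow_le_rpow (by linarith) (by linarith) hq)
          (Real.rpow_nonneg (by linarith) q) (by linarith)
      nlinarith [h2]

lemma phi_sub_phi_le {q s t : ℝ} (hq : 0 ≤ q) (hts : t ≤ s) :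
    s * |s| ^ q - t * |t| ^ q ≤ (q + 1) * (|s| ^ q + |t| ^ q) * (s - t) := by
  have hTnn : 0 ≤ |t| ^ q := Real.rpow_nonneg (abs_nonneg t) q
  have hSnn : 0 ≤ |s| ^ q := Real.rpow_nonneg (abs_nonneg s) q
  rcases le_or_gt 0 t with ht | ht
  · have hs : 0 ≤ s := ht.trans hts
    rw [abs_of_nonneg ht, abs_of_nonneg hs, self_mul_rpow hs hq, self_mul_rpow ht hq]
    calc s ^ (q+1) - t ^ (q+1) ≤ (q+1) * s ^ q * (s - t) := bernoulli_aux hq ht hts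
      _ ≤ (q+1) * (s ^ q + t ^ q) * (s - t) := by
          have h1 := Real.rpow_nonneg ht q
          nlinarith [mul_nonneg (mul_nonneg (by linarith : (0:ℝ) ≤ q+1) h1)
            (sub_nonneg.2 hts)]
  · rcases le_or_gt 0 s with hs | hs
    · rw [abs_of_nonneg hs, abs_of_neg ht, self_mul_rpow hs hq]
      have h1 : t * (-t) ^ q = -((-t) ^ (q+1)) := by
        rw [← self_mul_rpow (by linarith : (0:ℝ) ≤ -t) hq]; ring
      rw [h1]
      have h2 : s ^ (q+1) + (-t) ^ (q+1) ≤ (s ^ q + (-t) ^ q) * (s - t) := by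
        rw [← self_mul_rpow hs hq, ← self_mul_rpow (by linarith : (0:ℝ) ≤ -t) hq]
        have h3 : 0 ≤ s * (-t) ^ q := mul_nonneg hs (Real.rpow_nonneg (by linarith) q)
        have h4 : 0 ≤ (-t) * s ^ q := mul_nonneg (by linarith) (Real.rpow_nonneg hs q)
        nlinarith
      have h5 : (s ^ q + (-t) ^ q) * (s - t) ≤ (q+1) * (s ^ q + (-t) ^ q) * (s - t) := by
        have h6 : 0 ≤ s ^ q + (-t) ^ q :=
          add_nonneg (Real.rpow_nonneg hs q) (Real.rpow_nonneg (by linarith) q)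
        nlinarith [mul_nonneg (mul_nonneg hq h6) (sub_nonneg.2 hts)]
      linarith
    · rw [abs_of_neg hs, abs_of_neg ht]
      have h1 : s * (-s) ^ q = -((-s) ^ (q+1)) := by
        rw [← self_mul_rpow (by linarith : (0:ℝ) ≤ -s) hq]; ring
      have h2 : t * (-t) ^ q = -((-t) ^ (q+1)) := by
        rw [← self_mul_rpow (by linarith : (0:ℝ) ≤ -t) hq]; ring
      rw [h1, h2]
      have h3 := bernoulli_aux hq (by linarith : (0:ℝ) ≤ -s) (by linarith : -s ≤ -t)
      have h4 : 0 ≤ (-t) ^ q := Real.rpow_nonneg (by linarith) q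
      have h5 : 0 ≤ (-s) ^ q := Real.rpow_nonneg (by linarith) q
      nlinarith [mul_nonneg (mul_nonneg (by linarith : (0:ℝ) ≤ q+1) h5)
        (sub_nonneg.2 hts)]

lemma abs_phi_sub_phi_le {q : ℝ} (hq : 0 ≤ q) (s t : ℝ) :
    |s * |s| ^ q - t * |t| ^ q| ≤ (q + 1) * (|s| ^ q + |t| ^ q) * |s - t| := by
  rcases le_total t s with h | h
  · rw [abs_of_nonneg (sub_nonneg.2 (phi_mono hq h)), abs_of_nonneg (sub_nonneg.2 h)]
    exact phi_sub_phi_le hq h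
  · rw [abs_sub_comm (s * |s| ^ q), abs_sub_comm s,
      abs_of_nonneg (sub_nonneg.2 (phi_mono hq h)), abs_of_nonneg (sub_nonneg.2 h)]
    have h1 := phi_sub_phi_le hq h
    nlinarith [h1]

lemma add_rpow_le {x y θ : ℝ} (hx : 0 ≤ x) (hy : 0 ≤ y) (h0 : 0 ≤ θ) (h1 : θ ≤ 1) :
    (x + y) ^ θ ≤ x ^ θ + y ^ θ := by
  lift x to NNReal using hx
  lift y to NNReal using hy
  have h := NNReal.rpow_add_le_add_rpow x y h0 h1
  have h2 := NNReal.coe_le_coe.2 h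
  push_cast at h2
  convert h2 using 2

lemma add_rpow_le_two_rpow {a b r : ℝ} (ha : 0 ≤ a) (hb : 0 ≤ b) (hr : 0 ≤ r) :
    (a + b) ^ r ≤ 2 ^ r * (a ^ r + b ^ r) := by
  wlog hab : a ≤ b generalizing a b
  · have := this hb ha (by linarith)
    calc (a+b)^r = (b+a)^r := by ring_nf
      _ ≤ 2^r * (b^r + a^r) := this
      _ = 2^r * (a^r + b^r) := by ring
  · calc (a+b)^r ≤ (2*b)^r := Real.rpow_le_rpow (by linarith) (by linarith) hr
      _ = 2^r * b^r := Real.mul_rpow (by norm_num) hb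
      _ ≤ 2^r * (a^r + b^r) := by
          have h1 : 0 ≤ a ^ r := Real.rpow_nonneg ha r
          have h2 : (0:ℝ) ≤ 2 ^ r := Real.rpow_nonneg (by norm_num) r
          nlinarith

lemma abs_sq_mul_rpow {x q : ℝ} (hq : 0 ≤ q) : x ^ 2 * |x| ^ q = |x| ^ (q + 2) := by
  rcases eq_or_ne x 0 with h | h
  · simp [h, Real.zero_rpow (by positivity : q + 2 ≠ (0:ℝ))]
  · have hx : 0 < |x| := abs_pos.2 h
    rw [show q + 2 = q + (2:ℕ) by norm_num, Real.rpow_add_natCast hx.ne', ← sq_abs]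
    ring

lemma abs_rpow_two (x : ℝ) : |x| ^ (2:ℝ) = x ^ 2 := by
  rw [show (2:ℝ) = ((2:ℕ):ℝ) by norm_num, Real.rpow_natCast, sq_abs]

lemma key_ptwise {q x t : ℝ} (hq : 0 ≤ q) :
    |x * ((t + x) * |t + x| ^ q) - x * (t * |t| ^ q)| ≤
      (q + 1) * ((2 ^ q + 1) * (x ^ 2 * |t| ^ q) + 2 ^ q * |x| ^ (q + 2)) := by
  set s := t + x with hsdef
  have habs := abs_phi_sub_phi_le hq s t
  have hst : |s - t| = |x| := by rw [hsdef]; ring_nf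
  rw [hst] at habs
  have hs : |s| ^ q ≤ 2 ^ q * (|t| ^ q + |x| ^ q) :=
    le_trans (Real.rpow_le_rpow (abs_nonneg _) (abs_add_le t x) hq)
      (add_rpow_le_two_rpow (abs_nonneg t) (abs_nonneg x) hq)
  have h1 : |x * (s * |s| ^ q) - x * (t * |t| ^ q)| ≤ |x| * ((q+1) * (|s| ^ q + |t| ^ q) * |x|) := by
    calc |x * (s * |s| ^ q) - x * (t * |t| ^ q)| = |x * (s * |s| ^ q - t * |t| ^ q)| := by
          rw [mul_sub]
      _ = |x| * |s * |s| ^ q - t * |t| ^ q| := abs_mul _ _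
      _ ≤ |x| * ((q+1) * (|s| ^ q + |t| ^ q) * |x|) :=
          mul_le_mul_of_nonneg_left habs (abs_nonneg x)
  have h2 : |x| * ((q+1) * (|s| ^ q + |t| ^ q) * |x|) = (q+1) * (|s| ^ q + |t| ^ q) * x ^ 2 := by
    rw [← sq_abs]; ring
  have h3 : (q+1) * (|s| ^ q + |t| ^ q) * x ^ 2 ≤
      (q+1) * ((2 ^ q + 1) * |t| ^ q + 2 ^ q * |x| ^ q) * x ^ 2 := by
    have : |s| ^ q + |t| ^ q ≤ (2 ^ q + 1) * |t| ^ q + 2 ^ q * |x| ^ q := by linarith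
    have h4 := mul_le_mul_of_nonneg_left this (by linarith : (0:ℝ) ≤ q+1)
    exact mul_le_mul_of_nonneg_right h4 (sq_nonneg x)
  have h5 : (q+1) * ((2 ^ q + 1) * |t| ^ q + 2 ^ q * |x| ^ q) * x ^ 2 =
      (q + 1) * ((2 ^ q + 1) * (x ^ 2 * |t| ^ q) + 2 ^ q * (x ^ 2 * |x| ^ q)) := by ring
  rw [abs_sq_mul_rpow hq] at h5
  linarith

lemma absorb {m K D p : ℝ} (hm : 0 ≤ m) (hK : 0 ≤ K) (hD : 0 ≤ D) (hp : 2 ≤ p)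
    (h : m ≤ K + D * m ^ ((p - 2) / p)) : m ≤ 2 * K + (2 * D) ^ (p / 2) := by
  have hp0 : 0 < p := by linarith
  rcases le_or_gt m (2 * K) with h2 | h2
  · have : (0:ℝ) ≤ (2 * D) ^ (p / 2) := Real.rpow_nonneg (by linarith) _
    linarith
  · have hm0 : 0 < m := lt_of_le_of_lt (by linarith) h2
    have hθ : m ≤ 2 * D * m ^ ((p - 2) / p) := by linarith
    have hmexp : m ^ ((p-2)/p) * m ^ (2/p) = m := by
      rw [← Real.rpow_add hm0]
      have : (p-2)/p + 2/p = 1 := by field_simp; ring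
      rw [this, Real.rpow_one]
    have hpos : 0 < m ^ ((p-2)/p) := Real.rpow_pos_of_pos hm0 _
    have h6 : m ^ (2/p) ≤ 2 * D := by
      have h5 : m ^ ((p-2)/p) * m ^ (2/p) ≤ m ^ ((p-2)/p) * (2 * D) := by
        rw [hmexp]; linarith
      exact (mul_le_mul_iff_right₀ hpos).1 h5
    have h7 : (m ^ (2/p)) ^ (p/2) ≤ (2 * D) ^ (p/2) :=
      Real.rpow_le_rpow (Real.rpow_nonneg hm0.le _) h6 (by positivity)
    have h8 : (m ^ (2/p)) ^ (p/2) = m := by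
      rw [← Real.rpow_mul hm0.le, (by field_simp : 2/p*(p/2) = (1:ℝ)), Real.rpow_one]
    linarith [h8 ▸ h7]

lemma lyapunov {Ω : Type} [MeasurableSpace Ω] {μ : Measure Ω} [IsProbabilityMeasure μ]
    {f : Ω → ℝ} {r s : ℝ} (hr : 0 < r) (hrs : r ≤ s) (hf : MemLp f (ENNReal.ofReal s) μ) :
    ∫ ω, |f ω| ^ r ∂μ ≤ (∫ ω, |f ω| ^ s ∂μ) ^ (r / s) := by
  have hs : 0 < s := hr.trans_le hrs
  have hr0 : ENNReal.ofReal r ≠ 0 := by simp [ENNReal.ofReal_eq_zero]; linarith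
  have hs0 : ENNReal.ofReal s ≠ 0 := by simp [ENNReal.ofReal_eq_zero]; linarith
  have hfr : MemLp f (ENNReal.ofReal r) μ :=
    hf.mono_exponent (ENNReal.ofReal_le_ofReal hrs)
  have h := eLpNorm_le_eLpNorm_of_exponent_le (μ := μ)
    (ENNReal.ofReal_le_ofReal hrs) hf.aestronglyMeasurable
  rw [hfr.eLpNorm_eq_integral_rpow_norm hr0 ENNReal.ofReal_ne_top,
    hf.eLpNorm_eq_integral_rpow_norm hs0 ENNReal.ofReal_ne_top,
    ENNReal.toReal_ofReal hr.le, ENNReal.toReal_ofReal hs.le] at h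
  simp only [Real.norm_eq_abs] at h
  have hIr : 0 ≤ ∫ ω, |f ω| ^ r ∂μ :=
    integral_nonneg fun ω => Real.rpow_nonneg (abs_nonneg _) _
  have hIs : 0 ≤ ∫ ω, |f ω| ^ s ∂μ :=
    integral_nonneg fun ω => Real.rpow_nonneg (abs_nonneg _) _
  have h2 : (∫ ω, |f ω| ^ r ∂μ) ^ r⁻¹ ≤ (∫ ω, |f ω| ^ s ∂μ) ^ s⁻¹ :=
    (ENNReal.ofReal_le_ofReal_iff (Real.rpow_nonneg hIs _)).1 h
  have h3 := Real.rpow_le_rpow (Real.rpow_nonneg hIr _) h2 hr.le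
  rw [← Real.rpow_mul hIr, ← Real.rpow_mul hIs, inv_mul_cancel₀ hr.ne', Real.rpow_one] at h3
  rwa [(by rw [div_eq_mul_inv, mul_comm] : r / s = s⁻¹ * r)]

end RosenthalAux


open RosenthalAux

set_option maxHeartbeats 1000000 in
/-- Rosenthal's inequality for centered i.i.d. real random variables in `L^p`, `p ≥ 2`. -/
theorem rosenthal_iid (p : ℝ) (hp : 2 ≤ p) :
    ∃ c > (0 : ℝ), ∀ {Ω : Type} [MeasurableSpace Ω] (μ : Measure Ω),
      IsProbabilityMeasure μ →
      ∀ (n : ℕ) (hn : 0 < n) (X : Fin n → Ω → ℝ),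
      (∀ i, Measurable (X i)) →
      iIndepFun X μ →
      (∀ i, IdentDistrib (X i) (X ⟨0, hn⟩) μ μ) →
      MemLp (X ⟨0, hn⟩) (ENNReal.ofReal p) μ →
      (∫ ω, X ⟨0, hn⟩ ω ∂μ) = 0 →
      eLpNorm (fun ω => ∑ i, X i ω) (ENNReal.ofReal p) μ ≤
        ENNReal.ofReal (c * (Real.sqrt n * (eLpNorm (X ⟨0, hn⟩) 2 μ).toReal +
          (n : ℝ) ^ (1 / p) * (eLpNorm (X ⟨0, hn⟩) (ENNReal.ofReal p) μ).toReal)) := by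
  have hp0 : (0:ℝ) < p := by linarith
  have hp1 : (1:ℝ) ≤ p := by linarith
  set q : ℝ := p - 2 with hqdef
  have hq0 : (0:ℝ) ≤ q := by rw [hqdef]; linarith
  have hq2p : q + 2 = p := by rw [hqdef]; ring
  have h2q : (0:ℝ) < 2 ^ q := Real.rpow_pos_of_pos (by norm_num) q
  set C₀ : ℝ := (q + 1) * 2 ^ q * (2 ^ q + 2) with hC₀def
  have hC₀ : 0 < C₀ := by
    apply mul_pos (mul_pos (by linarith) h2q); linarith
  refine ⟨(2 * C₀) ^ (1/p) + (2 * C₀) ^ ((1:ℝ)/2),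
    add_pos (Real.rpow_pos_of_pos (by linarith) _) (Real.rpow_pos_of_pos (by linarith) _), ?_⟩
  intro Ω mΩ μ hprob n hn X hXm hXind hid hmem0 hcent
  haveI := hprob
  have hPtop : ENNReal.ofReal p ≠ ⊤ := ENNReal.ofReal_ne_top
  have hP0 : ENNReal.ofReal p ≠ 0 := by
    simp only [ne_eq, ENNReal.ofReal_eq_zero, not_le]; linarith
  have hPtoReal : (ENNReal.ofReal p).toReal = p := ENNReal.toReal_ofReal hp0.le
  have h1P : (1:ENNReal) ≤ ENNReal.ofReal p := by
    rw [← ENNReal.ofReal_one]; exact ENNReal.ofReal_le_ofReal hp1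
  have h2P : (2:ENNReal) ≤ ENNReal.ofReal p := by
    rw [← ENNReal.ofReal_ofNat 2]; exact ENNReal.ofReal_le_ofReal hp
  set X₀ : Ω → ℝ := X ⟨0, hn⟩ with hX₀def
  set S : Ω → ℝ := fun ω => ∑ i, X i ω with hSdef
  set T : Fin n → Ω → ℝ := fun i ω => ∑ j ∈ Finset.univ.erase i, X j ω with hTdef
  have hSm : Measurable S := Finset.measurable_sum _ fun i _ => hXm i
  have hTm : ∀ i, Measurable (T i) := fun i => Finset.measurable_sum _ fun j _ => hXm j
  have hTS : ∀ i ω, T i ω = S ω - X i ω := fun i ω => by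
    simp only [hTdef, hSdef]
    exact Finset.sum_erase_eq_sub (Finset.mem_univ i)
  have hST : ∀ i ω, S ω = T i ω + X i ω := fun i ω => by rw [hTS]; ring
  have hmemP : ∀ i, MemLp (X i) (ENNReal.ofReal p) μ := fun i => (hid i).symm.memLp_snd hmem0
  have hmem2 : ∀ i, MemLp (X i) 2 μ := fun i => (hmemP i).mono_exponent h2P
  have hSmemP : MemLp S (ENNReal.ofReal p) μ :=
    memLp_finset_sum Finset.univ fun i _ => hmemP i
  have hTmemP : ∀ i, MemLp (T i) (ENNReal.ofReal p) μ := fun i =>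
    memLp_finset_sum _ fun j _ => hmemP j
  have habsc : Continuous fun x : ℝ => |x| ^ q :=
    continuous_abs.rpow_const fun x => Or.inr hq0
  have hφc : Continuous fun x : ℝ => x * |x| ^ q := continuous_id.mul habsc
  have habspc : Continuous fun x : ℝ => |x| ^ p :=
    continuous_abs.rpow_const fun x => Or.inr hp0.le
  have hsqc : Continuous fun x : ℝ => x ^ 2 := by continuity
  set intp : ℝ := ∫ ω, |X₀ ω| ^ p ∂μ with hintpdef
  set V : ℝ := ∫ ω, (X₀ ω) ^ 2 ∂μ with hVdef
  set M : ℝ := ∫ ω, |S ω| ^ p ∂μ with hMdef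
  have hintp0 : 0 ≤ intp := integral_nonneg fun ω => Real.rpow_nonneg (abs_nonneg _) _
  have hV0 : 0 ≤ V := integral_nonneg fun ω => sq_nonneg _
  have hM0 : 0 ≤ M := integral_nonneg fun ω => Real.rpow_nonneg (abs_nonneg _) _
  have hIntp : ∀ i, (∫ ω, |X i ω| ^ p ∂μ) = intp := fun i =>
    ((hid i).comp habspc.measurable).integral_eq
  have hIV : ∀ i, (∫ ω, (X i ω) ^ 2 ∂μ) = V := fun i =>
    ((hid i).comp hsqc.measurable).integral_eq
  have hcent' : ∀ i, (∫ ω, X i ω ∂μ) = 0 := fun i => by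
    rw [(hid i).integral_eq]; exact hcent
  have hintXp : ∀ i, Integrable (fun ω => |X i ω| ^ p) μ := fun i => by
    have h := (hmemP i).integrable_norm_rpow hP0 hPtop
    simpa [hPtoReal, Real.norm_eq_abs] using h
  have hintX2 : ∀ i, Integrable (fun ω => (X i ω) ^ 2) μ := fun i => by
    simpa using (hmem2 i).integrable_sq
  have hintX : ∀ i, Integrable (X i) μ := fun i => (hmem2 i).integrable one_le_two
  have hintTq : ∀ i, Integrable (fun ω => |T i ω| ^ q) μ := by
    intro i
    rcases eq_or_lt_of_le hq0 with h | h
    · simp only [← h, Real.rpow_zero]; exact integrable_const 1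
    · have hqP : ENNReal.ofReal q ≤ ENNReal.ofReal p := ENNReal.ofReal_le_ofReal (by linarith [hq2p])
      have h2 := ((hTmemP i).mono_exponent hqP).integrable_norm_rpow
        (by simp only [ne_eq, ENNReal.ofReal_eq_zero, not_le]; linarith) ENNReal.ofReal_ne_top
      simpa [ENNReal.toReal_ofReal h.le, Real.norm_eq_abs] using h2
  have hindepTX : ∀ i, IndepFun (T i) (X i) μ := fun i => by
    have h := hXind.indepFun_finset_sum_of_notMem hXm (Finset.notMem_erase i Finset.univ)
    have e : T i = ∑ j ∈ Finset.univ.erase i, X j := by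
      funext ω; simp [hTdef, Finset.sum_apply]
    rw [e]; exact h
  have hindepX2Tq : ∀ i, IndepFun (fun ω => (X i ω)^2) (fun ω => |T i ω| ^ q) μ := fun i =>
    (hindepTX i).symm.comp hsqc.measurable habsc.measurable
  have hintX2Tq : ∀ i, Integrable (fun ω => (X i ω)^2 * |T i ω| ^ q) μ := fun i =>
    (hindepX2Tq i).integrable_mul (hintX2 i) (hintTq i)
  have hEX2Tq : ∀ i, ∫ ω, (X i ω)^2 * |T i ω| ^ q ∂μ = V * ∫ ω, |T i ω| ^ q ∂μ := fun i => by
    have h := (hindepX2Tq i).integral_fun_mul_eq_mul_integral (hintX2 i).aestronglyMeasurable (hintTq i).aestronglyMeasurable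
    rw [← hIV i]; exact h
  have hintphiT : ∀ i, Integrable (fun ω => T i ω * |T i ω| ^ q) μ := fun i => by
    have hq1P : ENNReal.ofReal (q+1) ≤ ENNReal.ofReal p :=
      ENNReal.ofReal_le_ofReal (by linarith [hq2p])
    have h2 := ((hTmemP i).mono_exponent hq1P).integrable_norm_rpow
      (by simp only [ne_eq, ENNReal.ofReal_eq_zero, not_le]; linarith) ENNReal.ofReal_ne_top
    rw [ENNReal.toReal_ofReal (by linarith)] at h2
    refine h2.mono' ((hφc.measurable.comp (hTm i)).aestronglyMeasurable)
      (Filter.Eventually.of_forall fun ω => ?_)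
    rw [Real.norm_eq_abs, abs_mul, abs_of_nonneg (Real.rpow_nonneg (abs_nonneg _) q),
      Real.norm_eq_abs, self_mul_rpow (abs_nonneg _) hq0]
  have hindepXphiT : ∀ i, IndepFun (X i) (fun ω => T i ω * |T i ω| ^ q) μ := fun i =>
    (hindepTX i).symm.comp measurable_id hφc.measurable
  have hintXphiT : ∀ i, Integrable (fun ω => X i ω * (T i ω * |T i ω| ^ q)) μ := fun i =>
    (hindepXphiT i).integrable_mul (hintX i) (hintphiT i)
  have hEXphiT : ∀ i, ∫ ω, X i ω * (T i ω * |T i ω| ^ q) ∂μ = 0 := fun i => by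
    have h := (hindepXphiT i).integral_fun_mul_eq_mul_integral (hintX i).aestronglyMeasurable (hintphiT i).aestronglyMeasurable
    rw [hcent' i, zero_mul] at h
    exact h
  -- pointwise-dominated integrability of the increment
  set g : Fin n → Ω → ℝ := fun i ω =>
    (q+1) * ((2^q + 1) * ((X i ω)^2 * |T i ω| ^ q) + 2^q * |X i ω| ^ p) with hgdef
  have hintg : ∀ i, Integrable (g i) μ := fun i =>
    (((hintX2Tq i).const_mul _).add ((hintXp i).const_mul _)).const_mul _
  have hptbound : ∀ i ω, |X i ω * (S ω * |S ω| ^ q) - X i ω * (T i ω * |T i ω| ^ q)| ≤ g i ω := by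
    intro i ω
    have h := key_ptwise (q := q) (x := X i ω) (t := T i ω) hq0
    rw [← hST i ω] at h
    rw [hgdef]
    simpa [hq2p] using h
  have hintsub : ∀ i, Integrable
      (fun ω => X i ω * (S ω * |S ω| ^ q) - X i ω * (T i ω * |T i ω| ^ q)) μ := fun i => by
    refine (hintg i).mono' ?_ (Filter.Eventually.of_forall fun ω => ?_)
    · exact (((hXm i).mul (hφc.measurable.comp hSm)).sub
        ((hXm i).mul (hφc.measurable.comp (hTm i)))).aestronglyMeasurable
    · rw [Real.norm_eq_abs]; exact hptbound i ω
  have hintXphiS : ∀ i, Integrable (fun ω => X i ω * (S ω * |S ω| ^ q)) μ := fun i => by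
    have e : (fun ω => X i ω * (S ω * |S ω| ^ q)) =
        fun ω => (X i ω * (S ω * |S ω| ^ q) - X i ω * (T i ω * |T i ω| ^ q)) +
          X i ω * (T i ω * |T i ω| ^ q) := by funext ω; ring
    rw [e]; exact (hintsub i).add (hintXphiT i)
  -- the key per-coordinate estimate
  have hkey : ∀ i, (∫ ω, X i ω * (S ω * |S ω| ^ q) ∂μ) ≤
      (q+1) * ((2^q + 1) * (V * ∫ ω, |T i ω| ^ q ∂μ) + 2^q * intp) := by
    intro i
    have e : (∫ ω, X i ω * (S ω * |S ω| ^ q) ∂μ) =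
        (∫ ω, (X i ω * (S ω * |S ω| ^ q) - X i ω * (T i ω * |T i ω| ^ q)) ∂μ) +
          ∫ ω, X i ω * (T i ω * |T i ω| ^ q) ∂μ := by
      rw [← integral_add (hintsub i) (hintXphiT i)]
      congr 1; funext ω; ring
    rw [e, hEXphiT i, add_zero]
    have h1 : (∫ ω, (X i ω * (S ω * |S ω| ^ q) - X i ω * (T i ω * |T i ω| ^ q)) ∂μ) ≤
        ∫ ω, g i ω ∂μ :=
      integral_mono (hintsub i) (hintg i) fun ω => (le_abs_self _).trans (hptbound i ω)
    have h2 : (∫ ω, g i ω ∂μ) =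
        (q+1) * ((2^q + 1) * (V * ∫ ω, |T i ω| ^ q ∂μ) + 2^q * intp) := by
      rw [hgdef]
      rw [integral_const_mul, integral_add ((hintX2Tq i).const_mul _) ((hintXp i).const_mul _),
        integral_const_mul, integral_const_mul, hEX2Tq i, hIntp i]
    linarith [h1, h2.le, h2.ge]
  -- Lyapunov-type bounds
  have hGi : ∀ i, (∫ ω, |T i ω| ^ q ∂μ) ≤ 2^q * (M ^ (q/p) + intp ^ (q/p)) := by
    intro i
    rcases eq_or_lt_of_le hq0 with h | h
    · simp only [← h, Real.rpow_zero, zero_div]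
      simp [measure_univ]
    · have h1 := lyapunov (μ := μ) (f := T i) h (by linarith [hq2p]) (hTmemP i)
      -- bound ∫ |T i|^p
      have hTnorm : eLpNorm (T i) (ENNReal.ofReal p) μ ≤
          eLpNorm S (ENNReal.ofReal p) μ + eLpNorm (X i) (ENNReal.ofReal p) μ := by
        have e : T i = fun ω => S ω - X i ω := funext fun ω => hTS i ω
        rw [e]; exact eLpNorm_sub_le hSmemP.1 (hmemP i).1 h1P
      rw [(hTmemP i).eLpNorm_eq_integral_rpow_norm hP0 hPtop,
        hSmemP.eLpNorm_eq_integral_rpow_norm hP0 hPtop,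
        (hmemP i).eLpNorm_eq_integral_rpow_norm hP0 hPtop, hPtoReal] at hTnorm
      simp only [Real.norm_eq_abs] at hTnorm
      rw [hIntp i, ← hMdef] at hTnorm
      have hITp0 : 0 ≤ ∫ ω, |T i ω| ^ p ∂μ :=
        integral_nonneg fun ω => Real.rpow_nonneg (abs_nonneg _) _
      have hreal : (∫ ω, |T i ω| ^ p ∂μ) ^ p⁻¹ ≤ M ^ p⁻¹ + intp ^ p⁻¹ := by
        have h3 := hTnorm.trans_eq
          (ENNReal.ofReal_add (Real.rpow_nonneg hM0 _) (Real.rpow_nonneg hintp0 _)).symm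
        exact (ENNReal.ofReal_le_ofReal_iff
          (add_nonneg (Real.rpow_nonneg hM0 _) (Real.rpow_nonneg hintp0 _))).1 h3
      have hITp : (∫ ω, |T i ω| ^ p ∂μ) ≤ 2^p * (M + intp) := by
        have h4 := Real.rpow_le_rpow (Real.rpow_nonneg hITp0 _) hreal hp0.le
        rw [Real.rpow_inv_rpow hITp0 hp0.ne'] at h4
        refine h4.trans ?_
        have h5 := add_rpow_le_two_rpow (Real.rpow_nonneg hM0 p⁻¹) (Real.rpow_nonneg hintp0 p⁻¹)
          hp0.le
        rwa [Real.rpow_inv_rpow hM0 hp0.ne', Real.rpow_inv_rpow hintp0 hp0.ne'] at h5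
      refine h1.trans ?_
      have h6 : ((∫ ω, |T i ω| ^ p ∂μ)) ^ (q/p) ≤ (2^p * (M + intp)) ^ (q/p) :=
        Real.rpow_le_rpow hITp0 hITp (by positivity)
      refine h6.trans ?_
      have e1 : ((2:ℝ)^p) ^ (q/p) = 2 ^ q := by
        rw [← Real.rpow_mul (by norm_num : (0:ℝ) ≤ 2)]
        congr 1; field_simp
      rw [Real.mul_rpow (Real.rpow_nonneg (by norm_num) p) (by linarith), e1]
      have e2 : (M + intp) ^ (q/p) ≤ M ^ (q/p) + intp ^ (q/p) :=
        add_rpow_le hM0 hintp0 (by positivity) ((div_le_one hp0).2 (by linarith [hq2p]))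
      exact mul_le_mul_of_nonneg_left e2 h2q.le
  -- sum identity
  have hpne : p ≠ 0 := ne_of_gt hp0
  have hnn : (0:ℝ) ≤ (n:ℝ) := Nat.cast_nonneg n
  have hq1 : (0:ℝ) ≤ q + 1 := by linarith
  have hphiS : ∀ ω, |S ω| ^ p = S ω * (S ω * |S ω| ^ q) := by
    intro ω
    rw [show S ω * (S ω * |S ω| ^ q) = (S ω)^2 * |S ω| ^ q by ring, abs_sq_mul_rpow hq0, hq2p]
  have hMsum : M = ∑ i, ∫ ω, X i ω * (S ω * |S ω| ^ q) ∂μ := by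
    rw [hMdef, ← integral_finset_sum Finset.univ fun i _ => hintXphiS i]
    congr 1; funext ω
    rw [hphiS ω, ← Finset.sum_mul]
  have hU : M ≤ n * ((q+1) * ((2^q + 1) * (V * (2^q * (M ^ (q/p) + intp ^ (q/p)))) + 2^q * intp)) := by
    calc M = ∑ i, ∫ ω, X i ω * (S ω * |S ω| ^ q) ∂μ := hMsum
      _
        ≤ ∑ _i : Fin n, ((q+1) * ((2^q + 1) * (V * (2^q * (M ^ (q/p) + intp ^ (q/p)))) +
            2^q * intp)) := by
          refine Finset.sum_le_sum fun i _ => ?_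
          refine (hkey i).trans ?_
          refine mul_le_mul_of_nonneg_left (add_le_add_left ?_ _) hq1
          refine mul_le_mul_of_nonneg_left ?_ (by linarith)
          exact mul_le_mul_of_nonneg_left (hGi i) hV0
      _ = n * ((q+1) * ((2^q + 1) * (V * (2^q * (M ^ (q/p) + intp ^ (q/p)))) + 2^q * intp)) := by
          simp [Finset.sum_const, Finset.card_univ, nsmul_eq_mul]
  have hVip : V * intp ^ (q/p) ≤ intp := by
    have hVle : V ≤ intp ^ (2/p) := by
      have h := lyapunov (μ := μ) (f := X₀) two_pos hp hmem0
      simp only [abs_rpow_two] at h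
      rw [hVdef, hintpdef]
      exact h
    rcases eq_or_lt_of_le hintp0 with h0 | h0
    · have hV00 : V = 0 := by
        refine le_antisymm ?_ hV0
        rw [← h0] at hVle
        rwa [Real.zero_rpow (by positivity : 2/p ≠ (0:ℝ))] at hVle
      rw [hV00, zero_mul]; exact hintp0
    · have h1 := mul_le_mul_of_nonneg_right hVle (Real.rpow_nonneg hintp0 (q/p))
      have h2 : 2/p + q/p = 1 := by
        rw [← add_div, show 2 + q = p by linarith [hq2p], div_self hpne]
      rwa [← Real.rpow_add h0, h2, Real.rpow_one] at h1
  have hC : M ≤ (C₀ * n * intp) + (C₀ * n * V) * M ^ ((p-2)/p) := by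
    rw [show (p-2)/p = q/p by rw [hqdef]]
    have e1 : (0:ℝ) ≤ (n:ℝ) * ((q+1) * (2^q * (V * M ^ (q/p)))) :=
      mul_nonneg hnn (mul_nonneg hq1 (mul_nonneg h2q.le
        (mul_nonneg hV0 (Real.rpow_nonneg hM0 _))))
    have e2 : (n:ℝ) * ((q+1) * ((2^q+1) * (2^q * (V * intp ^ (q/p))))) ≤
        (n:ℝ) * ((q+1) * ((2^q+1) * (2^q * intp))) := by
      refine mul_le_mul_of_nonneg_left (mul_le_mul_of_nonneg_left
        (mul_le_mul_of_nonneg_left ?_ (by linarith)) hq1) hnn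
      exact mul_le_mul_of_nonneg_left hVip h2q.le
    rw [hC₀def]
    linarith [hU, e1, e2]
  have hK0 : (0:ℝ) ≤ C₀ * n * intp := mul_nonneg (mul_nonneg hC₀.le hnn) hintp0
  have hD0 : (0:ℝ) ≤ C₀ * n * V := mul_nonneg (mul_nonneg hC₀.le hnn) hV0
  have habsorbed := absorb hM0 hK0 hD0 hp hC
  -- final conversion
  have hmem20 : MemLp X₀ 2 μ := hmem2 ⟨0, hn⟩
  have hBval : (eLpNorm X₀ (ENNReal.ofReal p) μ).toReal = intp ^ p⁻¹ := by
    rw [hmem0.eLpNorm_eq_integral_rpow_norm hP0 hPtop]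
    simp only [Real.norm_eq_abs, hPtoReal]
    rw [ENNReal.toReal_ofReal (Real.rpow_nonneg (integral_nonneg fun ω =>
      Real.rpow_nonneg (abs_nonneg _) _) _)]
  have hAval : (eLpNorm X₀ 2 μ).toReal = V ^ ((2:ℝ)⁻¹) := by
    rw [hmem20.eLpNorm_eq_integral_rpow_norm (by norm_num) (by norm_num)]
    simp only [Real.norm_eq_abs, ENNReal.toReal_ofNat, abs_rpow_two]
    rw [ENNReal.toReal_ofReal (Real.rpow_nonneg (integral_nonneg fun ω => sq_nonneg _) _)]
  rw [hSmemP.eLpNorm_eq_integral_rpow_norm hP0 hPtop]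
  simp only [Real.norm_eq_abs, hPtoReal]
  refine ENNReal.ofReal_le_ofReal ?_
  rw [← hMdef, hAval, hBval]
  simp only [one_div]
  -- real inequality
  have hDn : (0:ℝ) ≤ 2*(C₀*(n:ℝ)*V) := by linarith
  have hKn : (0:ℝ) ≤ 2*(C₀*(n:ℝ)*intp) := by linarith
  have s1 : M ^ p⁻¹ ≤ (2*(C₀*(n:ℝ)*intp) + (2*(C₀*(n:ℝ)*V))^(p/2)) ^ p⁻¹ :=
    Real.rpow_le_rpow hM0 (by linarith [habsorbed]) (by positivity)
  have s2 : (2*(C₀*(n:ℝ)*intp) + (2*(C₀*(n:ℝ)*V))^(p/2)) ^ p⁻¹ ≤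
      (2*(C₀*(n:ℝ)*intp)) ^ p⁻¹ + ((2*(C₀*(n:ℝ)*V))^(p/2)) ^ p⁻¹ :=
    add_rpow_le hKn (Real.rpow_nonneg hDn _) (by positivity) (inv_le_one_of_one_le₀ hp1)
  have s3 : ((2*(C₀*(n:ℝ)*V))^(p/2)) ^ p⁻¹ = (2*(C₀*(n:ℝ)*V)) ^ ((2:ℝ)⁻¹) := by
    rw [← Real.rpow_mul hDn]
    congr 1
    field_simp
  have s4 : (2*(C₀*(n:ℝ)*intp)) ^ p⁻¹ = (2*C₀) ^ p⁻¹ * ((n:ℝ) ^ p⁻¹ * intp ^ p⁻¹) := by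
    rw [show 2*(C₀*(n:ℝ)*intp) = (2*C₀) * ((n:ℝ) * intp) by ring,
      Real.mul_rpow (by linarith) (mul_nonneg hnn hintp0), Real.mul_rpow hnn hintp0]
  have s5 : (2*(C₀*(n:ℝ)*V)) ^ ((2:ℝ)⁻¹) = (2*C₀) ^ ((2:ℝ)⁻¹) * ((n:ℝ) ^ ((2:ℝ)⁻¹) * V ^ ((2:ℝ)⁻¹)) := by
    rw [show 2*(C₀*(n:ℝ)*V) = (2*C₀) * ((n:ℝ) * V) by ring,
      Real.mul_rpow (by linarith) (mul_nonneg hnn hV0), Real.mul_rpow hnn hV0]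
  have s6 : Real.sqrt (n:ℝ) = (n:ℝ) ^ ((2:ℝ)⁻¹) := by
    rw [Real.sqrt_eq_rpow, one_div]
  rw [s6]
  have hc1 : (0:ℝ) ≤ (2*C₀) ^ p⁻¹ := Real.rpow_nonneg (by linarith) _
  have hc2 : (0:ℝ) ≤ (2*C₀) ^ ((2:ℝ)⁻¹) := Real.rpow_nonneg (by linarith) _
  have ht1 : (0:ℝ) ≤ (n:ℝ) ^ p⁻¹ * intp ^ p⁻¹ :=
    mul_nonneg (Real.rpow_nonneg hnn _) (Real.rpow_nonneg hintp0 _)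
  have ht2 : (0:ℝ) ≤ (n:ℝ) ^ ((2:ℝ)⁻¹) * V ^ ((2:ℝ)⁻¹) :=
    mul_nonneg (Real.rpow_nonneg hnn _) (Real.rpow_nonneg hV0 _)
  calc M ^ p⁻¹ ≤ (2*(C₀*(n:ℝ)*intp)) ^ p⁻¹ + ((2*(C₀*(n:ℝ)*V))^(p/2)) ^ p⁻¹ := s1.trans s2
    _ = (2*C₀) ^ p⁻¹ * ((n:ℝ) ^ p⁻¹ * intp ^ p⁻¹) +
        (2*C₀) ^ ((2:ℝ)⁻¹) * ((n:ℝ) ^ ((2:ℝ)⁻¹) * V ^ ((2:ℝ)⁻¹)) := by rw [s3, s4, s5]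
    _ ≤ ((2*C₀) ^ p⁻¹ + (2*C₀) ^ ((2:ℝ)⁻¹)) *
        ((n:ℝ) ^ ((2:ℝ)⁻¹) * V ^ ((2:ℝ)⁻¹) + (n:ℝ) ^ p⁻¹ * intp ^ p⁻¹) := by
      nlinarith [mul_nonneg hc1 ht2, mul_nonneg hc2 ht1]
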